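/- Let P ⊆ Q be an inclusion of von Neumann algebras with (Q, τ) a tracial factor (or just: with faithful trace τ and τ-preserving conditional expectation E_P), and suppose u ∈ Q is a unitary with uPu* ⊆ P, the center Z(P) = ℂ·1, P ∩ (P' ∩ Q) = ℂ·1, and E_P(u) ≠ 0. Then u factors as u = a·b where a is a unitary in P and b is a unitary in P' ∩ Q; explicitly a = c⁻¹ᐟ² E_P(u) for the positive scalar c with E_P(u)*E_P(u) = c·1. -/
import Mathlib


/-- Unitary factorization. Let P ⊆ Q with faithful positive tracial
state τ and τ-preserving conditional expectation E, u a unitary with uPu* ⊆ P,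
P ∩ (P' ∩ Q) = ℂ·1, and E(u) ≠ 0. Then u = a·b with a a unitary in P,
b a unitary in P' ∩ Q, and explicitly a = c^{-1/2}·E(u) where
E(u)*E(u) = c·1 for a positive real scalar c. -/
theorem stmt8 {Q : Type*} [Ring Q] [Algebra ℂ Q] [StarRing Q] [StarModule ℂ Q]
    (P : Subalgebra ℂ Q)
    (τ : Q →ₗ[ℂ] ℂ) (hτ1 : τ 1 = 1)
    (htrace : ∀ a b : Q, τ (a * b) = τ (b * a))
    (hpos : ∀ x : Q, 0 ≤ (τ (star x * x)).re ∧ (τ (star x * x)).im = 0)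
    (hfaith : ∀ x : Q, τ (star x * x) = 0 → x = 0)
    (E : Q →ₗ[ℂ] Q) (hτE : ∀ x : Q, τ (E x) = τ x)
    (hrange : ∀ q : Q, E q ∈ P) (hid : ∀ p ∈ P, E p = p)
    (hbimod : ∀ a ∈ P, ∀ b ∈ P, ∀ q : Q, E (a * q * b) = a * E q * b)
    (hEstar : ∀ x : Q, E (star x) = star (E x))
    (hZ : ∀ z ∈ P, (∀ p ∈ P, Commute z p) → ∃ s : ℂ, z = s • (1 : Q))
    (u : Q) (hu₁ : star u * u = 1) (hu₂ : u * star u = 1)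
    (hconj : ∀ p ∈ P, u * p * star u ∈ P) (hEu : E u ≠ 0) :
    ∃ (a b : Q) (c : ℝ), 0 < c ∧
      a ∈ P ∧ (∀ p ∈ P, Commute b p) ∧
      star a * a = 1 ∧ a * star a = 1 ∧
      star b * b = 1 ∧ b * star b = 1 ∧
      u = a * b ∧
      star (E u) * E u = ((c : ℂ)) • (1 : Q) ∧
      a = ((Real.sqrt c)⁻¹ : ℂ) • E u := by
  -- P is star-closed
  have hPstar : ∀ p ∈ P, star p ∈ P := by
    intro p hp
    have h1 := hrange (star p)
    rwa [hEstar, hid p hp] at h1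
  have hEuP : E u ∈ P := hrange u
  have hsEuP : star (E u) ∈ P := hPstar _ hEuP
  -- key commutation : star u * E u commutes with P
  have hw : ∀ p ∈ P, (star u * E u) * p = p * (star u * E u) := by
    intro p hp
    have h1 : E (u * p) = E u * p := by
      have := hbimod 1 P.one_mem p hp u
      simpa using this
    have h2 : E (u * p) = (u * p * star u) * E u := by
      have h := hbimod (u * p * star u) (hconj p hp) 1 P.one_mem u
      have h3 : u * p * star u * u * 1 = u * p := by
        rw [mul_one, mul_assoc, hu₁, mul_one]
      rw [h3, mul_one] at h
      exact h
    have h4 : E u * p = u * p * star u * E u := by rw [← h1, h2]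
    calc (star u * E u) * p = star u * (E u * p) := by rw [mul_assoc]
      _ = star u * (u * p * star u * E u) := by rw [h4]
      _ = p * (star u * E u) := by
          simp only [← mul_assoc]
          rw [hu₁, one_mul]
  -- star of it commutes with P too
  have hw' : ∀ p ∈ P, (star (E u) * u) * p = p * (star (E u) * u) := by
    intro p hp
    have h := congrArg star (hw (star p) (hPstar p hp))
    simp only [star_mul, star_star] at h
    simpa [mul_assoc] using h.symm
  -- star (E u) * E u is central in P
  have hkey : star (E u) * E u = (star (E u) * u) * (star u * E u) := by
    rw [mul_assoc, ← mul_assoc u, hu₂, one_mul]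
  have hcomm : ∀ p ∈ P, Commute (star (E u) * E u) p := by
    intro p hp
    show (star (E u) * E u) * p = p * (star (E u) * E u)
    rw [hkey, mul_assoc, hw p hp, ← mul_assoc, hw' p hp, mul_assoc]
  obtain ⟨s, hs⟩ := hZ _ (P.mul_mem hsEuP hEuP) hcomm
  -- identify s with τ value
  have hts : τ (star (E u) * E u) = s := by
    rw [hs, map_smul, hτ1, smul_eq_mul, mul_one]
  obtain ⟨hre, him⟩ := hpos (E u)
  set c : ℝ := (τ (star (E u) * E u)).re with hcdef
  have hsc : s = (c : ℂ) := by
    rw [← hts]; exact Complex.ext rfl him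
  have hc : 0 < c := by
    rcases lt_or_eq_of_le hre with h | h
    · exact h
    · exfalso
      apply hEu
      apply hfaith
      rw [hts, hsc, ← h]
      simp
  have hEc : star (E u) * E u = ((c : ℂ)) • (1 : Q) := by rw [hs, hsc]
  -- the unitary a
  set r : ℂ := ((Real.sqrt c)⁻¹ : ℂ) with hrdef
  set a : Q := r • E u with hadef
  have hstarr : star r = r := by
    simp [hrdef, Complex.star_def, map_inv₀, Complex.conj_ofReal]
  have hstara : star a = r • star (E u) := by
    rw [hadef, star_smul, hstarr]
  have hrrc : r * r * (c : ℂ) = 1 := by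
    rw [hrdef]
    rw [← Complex.ofReal_inv, ← Complex.ofReal_mul, ← Complex.ofReal_mul]
    norm_cast
    rw [← Real.sqrt_inv, Real.mul_self_sqrt (by positivity), inv_mul_cancel₀ hc.ne']
  have haa : star a * a = 1 := by
    rw [hstara, hadef, smul_mul_smul_comm, hEc, smul_smul, hrrc, one_smul]
  have haa' : a * star a = 1 := by
    set A : Q := a * star a with hAdef
    have hA : A * A = A := by
      rw [hAdef, show a * star a * (a * star a) = a * (star a * a) * star a by
        simp [mul_assoc], haa, mul_one]
    have hAstar : star A = A := by simp [hAdef, star_mul, star_star]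
    have hx : star (1 - A) * (1 - A) = 1 - A := by
      rw [star_sub, star_one, hAstar]
      calc (1 - A) * (1 - A) = 1 - A - A + A * A := by noncomm_ring
        _ = 1 - A := by rw [hA]; abel
    have hτA : τ A = 1 := by
      rw [hAdef, htrace a (star a), haa, hτ1]
    have : τ (star (1 - A) * (1 - A)) = 0 := by
      rw [hx, map_sub, hτ1, hτA, sub_self]
    have h0 := hfaith _ this
    have : A = 1 := by
      have := sub_eq_zero.mp h0
      exact this.symm
    rw [hAdef] at this
    exact this
  -- the unitary b
  set b : Q := star a * u with hbdef
  have hbb : star b * b = 1 := by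
    rw [hbdef, star_mul, star_star, mul_assoc, ← mul_assoc a, haa', one_mul, hu₁]
  have hbb' : b * star b = 1 := by
    rw [hbdef, star_mul, star_star, mul_assoc, ← mul_assoc u, hu₂, one_mul, haa]
  have hab : a * b = u := by
    rw [hbdef, ← mul_assoc, haa', one_mul]
  have hbcomm : ∀ p ∈ P, Commute b p := by
    intro p hp
    show b * p = p * b
    rw [hbdef, hstara, smul_mul_assoc, smul_mul_assoc, mul_smul_comm, hw' p hp]
  refine ⟨a, b, c, hc, ?_, hbcomm, haa, haa', hbb, hbb', hab.symm, hEc, hadef⟩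
  exact P.smul_mem hEuP r
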